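/- The closed-form measures αᵢ(a) = exp(−λᵢ ℓᵢ(a)) / Z^{λᵢ/Λ} with Z = ∑_a exp(−∑ⱼ λⱼℓⱼ(a)), Λ = ∑ⱼ λⱼ, satisfy the stationarity equation of the entropy-regularized unnormalized game: for every player i and joint action a, ℓᵢ(a) + (1/λᵢ) log αᵢ(a) + σ = 0, where σ = (1/Λ) log Z is a common Lagrange multiplier. -/
import Mathlib


/-- The closed-form entropy-regularized measures satisfy the stationarity
equation with the common multiplier `σ = (1/Λ) log Z`. -/
theorem entropy_measures_stationarity {A : Type*} [Fintype A]
    [Nonempty A] {N : ℕ} (hN : 0 < N)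
    (ℓ : Fin N → A → ℝ) (lam : Fin N → ℝ) (hlam : ∀ i, 0 < lam i) :
    let Z : ℝ := ∑ a, Real.exp (-∑ j, lam j * ℓ j a)
    let Λ : ℝ := ∑ j, lam j
    let α : Fin N → A → ℝ := fun i a =>
      Real.exp (-(lam i * ℓ i a)) / Z ^ (lam i / Λ)
    let σ : ℝ := (1 / Λ) * Real.log Z
    ∀ i a, ℓ i a + (1 / lam i) * Real.log (α i a) + σ = 0 := by
  intro Z Λ α σ i a
  have hZ : 0 < Z := Finset.sum_pos (fun a _ => Real.exp_pos _) Finset.univ_nonempty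
  have hΛ : 0 < Λ := Finset.sum_pos (fun j _ => hlam j) ⟨i, Finset.mem_univ i⟩
  have hlog : Real.log (α i a) = -(lam i * ℓ i a) - (lam i / Λ) * Real.log Z := by
    rw [Real.log_div (Real.exp_ne_zero _) (Real.rpow_pos_of_pos hZ _).ne',
      Real.log_exp, Real.log_rpow hZ]
  rw [hlog]
  show ℓ i a + (1 / lam i) * (-(lam i * ℓ i a) - (lam i / Λ) * Real.log Z)
      + (1 / Λ) * Real.log Z = 0
  field_simp [(hlam i).ne', hΛ.ne']
  ring
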